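/- A function γ' of bounded variation on the circle satisfies that both one-sided limits of ‖γ'‖ are nonzero at every point if and only if the essential infimum of ‖γ'(s)‖ over the circle is strictly positive. -/

import Mathlib

open MeasureTheory Set Filter

/-- From a family of infinite sets, one can select pairwise distinct representatives. -/
lemma exists_inj_seq_aux {A : ℕ → Set ℝ} (hA : ∀ n, (A n).Infinite) :
    ∃ u : ℕ → ℝ, Function.Injective u ∧ ∀ n, u n ∈ A n := by
  have hpick : ∀ (n : ℕ) (F : Finset ℝ), ∃ x, x ∈ A n ∧ x ∉ F := by
    intro n F
    obtain ⟨a, ha, haF⟩ := (hA n).exists_notMem_finset F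
    exact ⟨a, ha, haF⟩
  choose pick hpA hpF using hpick
  obtain ⟨F, hF0, hFs⟩ : ∃ F : ℕ → Finset ℝ, F 0 = ∅ ∧
      ∀ n, F (n + 1) = insert (pick n (F n)) (F n) :=
    ⟨fun n => Nat.rec ∅ (fun n Fn => insert (pick n Fn) Fn) n, rfl, fun _ => rfl⟩
  refine ⟨fun n => pick n (F n), ?_, fun n => hpA n (F n)⟩
  have hmono : ∀ m n, m ≤ n → F m ⊆ F n := by
    intro m n h
    induction n, h using Nat.le_induction with
    | base => exact subset_rfl
    | succ n h ih => rw [hFs]; exact ih.trans (Finset.subset_insert _ _)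
  have key : ∀ m n, m < n → pick m (F m) ≠ pick n (F n) := by
    intro m n hmn h
    apply hpF n (F n)
    rw [← h]
    exact hmono (m + 1) n hmn (by rw [hFs]; exact Finset.mem_insert_self _ _)
  intro a b hab
  by_contra hne
  rcases lt_or_gt_of_ne hne with h | h
  · exact key a b h hab
  · exact key b a h hab.symm

/-- For a function `γ'` of bounded variation on the circle
(modeled as a 1-periodic function `ℝ → ℝ²` of finite variation on `[0,1]`),
the condition that at every point both one-sided limits of `‖γ'‖` are nonzero
(equivalently, `‖γ'‖` does not tend to `0` from either side) is equivalent to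
the essential infimum of `‖γ'(s)‖` over the circle being strictly positive. -/
theorem stmt_0 (γ' : ℝ → EuclideanSpace ℝ (Fin 2))
    (hper : Function.Periodic γ' 1)
    (hBV : eVariationOn γ' (Set.Icc 0 1) ≠ ⊤) :
    ((∀ s : ℝ, ¬ Tendsto (fun t => ‖γ' t‖) (nhdsWithin s (Set.Ioi s)) (nhds 0)) ∧
     (∀ s : ℝ, ¬ Tendsto (fun t => ‖γ' t‖) (nhdsWithin s (Set.Iio s)) (nhds 0))) ↔
    0 < essInf (fun s => ‖γ' s‖) (volume.restrict (Set.Icc (0:ℝ) 1)) := by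
  set f : ℝ → ℝ := fun t => ‖γ' t‖ with hf
  set μr := volume.restrict (Set.Icc (0:ℝ) 1) with hμr
  -- periodicity of f
  have fper : Function.Periodic f 1 := fun x => by simp only [hf, hper x]
  have fshift : ∀ (x : ℝ) (n : ℤ), f (x - n * 1) = f x := fun x n => fper.sub_int_mul_eq n
  -- global bound
  set B : ℝ := ‖γ' 0‖ + (eVariationOn γ' (Set.Icc 0 1)).toReal with hB
  have hBdd : ∀ t, f t ≤ B := by
    intro t
    have h1 : γ' (t - (⌊t⌋ : ℝ) * 1) = γ' t := hper.sub_int_mul_eq ⌊t⌋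
    have h2 : t - (⌊t⌋ : ℝ) * 1 ∈ Set.Icc (0 : ℝ) 1 := by
      constructor
      · have := Int.floor_le t; linarith
      · have := Int.lt_floor_add_one t; linarith
    have hedist : edist (γ' 0) (γ' (t - (⌊t⌋ : ℝ) * 1)) ≤ eVariationOn γ' (Set.Icc 0 1) :=
      eVariationOn.edist_le γ' (by constructor <;> norm_num) h2
    have hdist : dist (γ' 0) (γ' (t - (⌊t⌋ : ℝ) * 1)) ≤ (eVariationOn γ' (Set.Icc 0 1)).toReal := by
      rw [dist_edist]
      exact ENNReal.toReal_mono hBV hedist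
    have h3 : ‖γ' (t - (⌊t⌋ : ℝ) * 1)‖ - ‖γ' 0‖ ≤ dist (γ' (t - (⌊t⌋ : ℝ) * 1)) (γ' 0) := by
      rw [dist_eq_norm]; exact norm_sub_norm_le _ _
    rw [dist_comm] at hdist
    have : f t = ‖γ' (t - (⌊t⌋ : ℝ) * 1)‖ := by rw [hf]; simp only [h1]
    rw [this, hB]; linarith
  -- bounded variation of γ' on Icc (-1) 2
  have hIcc : ∀ a b c : ℝ, a ≤ b → b ≤ c →
      eVariationOn γ' (Set.Icc a b) + eVariationOn γ' (Set.Icc b c)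
        = eVariationOn γ' (Set.Icc a c) := by
    intro a b c hab hbc
    have := eVariationOn.Icc_add_Icc (s := (Set.univ : Set ℝ)) γ' hab hbc (Set.mem_univ b)
    simpa using this
  have etrans : ∀ c : ℝ, (∀ x, γ' (x + c) = γ' x) →
      eVariationOn γ' (Set.Icc (0 + c) (1 + c)) = eVariationOn γ' (Set.Icc 0 1) := by
    intro c hc
    have hmono : MonotoneOn (fun x : ℝ => x + c) (Set.Icc 0 1) :=
      fun a _ b _ h => by simpa using h
    have := eVariationOn.comp_eq_of_monotoneOn γ' (fun x : ℝ => x + c) hmono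
    rw [image_add_const_Icc] at this
    rw [← this]
    congr 1
    funext x
    exact hc x
  have e1 : eVariationOn γ' (Set.Icc (-1 : ℝ) 0) = eVariationOn γ' (Set.Icc 0 1) := by
    have := etrans (-1) (fun x => by simpa [sub_eq_add_neg] using hper.sub_eq x)
    simpa using this
  have e2 : eVariationOn γ' (Set.Icc (1 : ℝ) 2) = eVariationOn γ' (Set.Icc 0 1) := by
    have := etrans 1 (fun x => hper x)
    norm_num at this
    exact this
  have hBV2 : BoundedVariationOn γ' (Set.Icc (-1 : ℝ) 2) := by
    unfold BoundedVariationOn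
    rw [← hIcc (-1) 1 2 (by norm_num) (by norm_num),
      ← hIcc (-1) 0 1 (by norm_num) (by norm_num), e1, e2]
    simp only [ne_eq, ENNReal.add_eq_top, not_or]
    exact ⟨⟨hBV, hBV⟩, hBV⟩
  -- f has bounded variation on Icc (-1) 2
  have hfBV : LocallyBoundedVariationOn f (Set.Icc (-1 : ℝ) 2) := by
    have : BoundedVariationOn (norm ∘ γ') (Set.Icc (-1 : ℝ) 2) :=
      lipschitzWith_one_norm.comp_boundedVariationOn hBV2
    exact this.locallyBoundedVariationOn
  -- monotone decomposition and one-sided limits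
  obtain ⟨p, q, hp, hq, hpq⟩ := hfBV.exists_monotoneOn_sub_monotoneOn
  set clamp : ℝ → ℝ := fun x => max (min x 2) (-1) with hclamp
  have hclamp_mono : Monotone clamp := (monotone_id.min monotone_const).max monotone_const
  have hclamp_mem : ∀ x, clamp x ∈ Set.Icc (-1 : ℝ) 2 :=
    fun x => ⟨le_max_right _ _, max_le (min_le_right _ _) (by norm_num)⟩
  have hclamp_eq : ∀ x ∈ Set.Icc (-1 : ℝ) 2, clamp x = x := by
    intro x hx
    rw [hclamp]
    simp only [min_eq_left hx.2, max_eq_left hx.1]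
  set P : ℝ → ℝ := fun x => p (clamp x) with hP
  set Q : ℝ → ℝ := fun x => q (clamp x) with hQ
  have hPmono : Monotone P := fun a b h => hp (hclamp_mem a) (hclamp_mem b) (hclamp_mono h)
  have hQmono : Monotone Q := fun a b h => hq (hclamp_mem a) (hclamp_mem b) (hclamp_mono h)
  have hfeq : ∀ x ∈ Set.Icc (-1 : ℝ) 2, f x = P x - Q x := by
    intro x hx
    show f x = p (clamp x) - q (clamp x)
    rw [hclamp_eq x hx]
    exact congrFun hpq x
  have hlimR : ∀ s ∈ Set.Icc (0 : ℝ) 1, ∃ L, Tendsto f (nhdsWithin s (Set.Ioi s)) (nhds L) := by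
    intro s hs
    refine ⟨sInf (P '' Set.Ioi s) - sInf (Q '' Set.Ioi s), ?_⟩
    have hTP := hPmono.tendsto_nhdsGT s
    have hTQ := hQmono.tendsto_nhdsGT s
    refine (hTP.sub hTQ).congr' ?_
    have hmem : Set.Ioo s 2 ∈ nhdsWithin s (Set.Ioi s) :=
      Ioo_mem_nhdsGT_of_mem ⟨le_rfl, lt_of_le_of_lt hs.2 (by norm_num)⟩
    filter_upwards [hmem] with t ht
    exact (hfeq t ⟨by linarith [hs.1, ht.1], ht.2.le⟩).symm
  have hlimL : ∀ s ∈ Set.Icc (0 : ℝ) 1, ∃ L, Tendsto f (nhdsWithin s (Set.Iio s)) (nhds L) := by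
    intro s hs
    refine ⟨sSup (P '' Set.Iio s) - sSup (Q '' Set.Iio s), ?_⟩
    have hTP := hPmono.tendsto_nhdsLT s
    have hTQ := hQmono.tendsto_nhdsLT s
    refine (hTP.sub hTQ).congr' ?_
    have hmem : Set.Ioo (-1 : ℝ) s ∈ nhdsWithin s (Set.Iio s) :=
      Ioo_mem_nhdsLT_of_mem ⟨lt_of_lt_of_le (by norm_num) hs.1, le_rfl⟩
    filter_upwards [hmem] with t ht
    exact (hfeq t ⟨ht.1.le, by linarith [hs.2, ht.2]⟩).symm
  constructor
  · -- (A) ⇒ essInf > 0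
    intro hA
    by_contra hm
    push_neg at hm
    rw [essInf_eq_sSup] at hm
    -- the set S is bounded above
    have hSbdd : BddAbove {a : ℝ | μr {x | f x < a} = 0} := by
      refine ⟨B + 1, fun a ha => ?_⟩
      simp only [Set.mem_setOf_eq] at ha
      by_contra h
      push_neg at h
      have huniv : {x : ℝ | f x < a} = Set.univ :=
        Set.eq_univ_of_forall fun x => lt_of_le_of_lt (hBdd x) (by linarith)
      rw [huniv] at ha
      simp only [hμr, Measure.restrict_apply_univ] at ha
      rw [Real.volume_Icc] at ha
      norm_num at ha
    -- each sublevel set is infinite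
    have hAinf : ∀ n : ℕ, ({x | f x < 1 / ((n : ℝ) + 1)} ∩ Set.Icc (0 : ℝ) 1).Infinite := by
      intro n
      by_contra hcon
      rw [Set.not_infinite] at hcon
      have hfin := hcon
      have hz : μr {x | f x < 1 / ((n : ℝ) + 1)} = 0 := by
        rw [hμr, Measure.restrict_apply' measurableSet_Icc]
        exact hfin.measure_zero _
      have hle : 1 / ((n : ℝ) + 1) ≤ sSup {a : ℝ | μr {x | f x < a} = 0} :=
        le_csSup hSbdd hz
      have : (0 : ℝ) < 1 / ((n : ℝ) + 1) := by positivity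
      linarith
    obtain ⟨u, huinj, humem⟩ := exists_inj_seq_aux hAinf
    obtain ⟨s, hs, φ, hφ, hconv⟩ := isCompact_Icc.tendsto_subseq (fun n => (humem n).2)
    have hfu : ∀ n, f (u n) < 1 / ((n : ℝ) + 1) := fun n => (humem n).1
    -- one of the sides contains infinitely many terms
    have hside : {k | s < u (φ k)}.Infinite ∨ {k | u (φ k) < s}.Infinite := by
      by_contra hcon
      push_neg at hcon
      obtain ⟨h1, h2⟩ := hcon
      have h3 : {k | u (φ k) = s}.Finite := by
        apply Set.Subsingleton.finite
        intro a ha b hb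
        exact hφ.injective (huinj (ha.trans hb.symm))
      have : (Set.univ : Set ℕ).Finite := by
        refine (((h1.union h2).union h3).subset ?_)
        intro k _
        rcases lt_trichotomy s (u (φ k)) with h | h | h
        · exact Or.inl (Or.inl h)
        · exact Or.inr h.symm
        · exact Or.inl (Or.inr h)
      exact Set.infinite_univ this
    -- squeeze bound for subsequences
    have hbound : ∀ ψ : ℕ → ℕ, StrictMono ψ →
        Tendsto (fun k => f (u (φ (ψ k)))) atTop (nhds 0) := by
      intro ψ hψ
      refine squeeze_zero (g := fun k : ℕ => 1 / ((k : ℝ) + 1)) (fun k => ?_) (fun k => ?_)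
        tendsto_one_div_add_atTop_nhds_zero_nat
      · exact norm_nonneg _
      · refine le_trans (hfu (φ (ψ k))).le ?_
        apply one_div_le_one_div_of_le (by positivity)
        have h1 : k ≤ φ (ψ k) := le_trans (hψ.le_apply) (hφ.le_apply)
        exact_mod_cast Nat.succ_le_succ h1
    rcases hside with hinf | hinf
    · obtain ⟨ψ, hψ, hψP⟩ :=
        Filter.extraction_of_frequently_atTop (Nat.frequently_atTop_iff_infinite.2 hinf)
      have hv : Tendsto (fun k => u (φ (ψ k))) atTop (nhdsWithin s (Set.Ioi s)) :=
        tendsto_nhdsWithin_of_tendsto_nhds_of_eventually_within _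
          (hconv.comp hψ.tendsto_atTop) (Eventually.of_forall hψP)
      obtain ⟨L, hL⟩ := hlimR s hs
      have hL0 : L = 0 := tendsto_nhds_unique (hL.comp hv) (hbound ψ hψ)
      exact hA.1 s (hL0 ▸ hL)
    · obtain ⟨ψ, hψ, hψP⟩ :=
        Filter.extraction_of_frequently_atTop (Nat.frequently_atTop_iff_infinite.2 hinf)
      have hv : Tendsto (fun k => u (φ (ψ k))) atTop (nhdsWithin s (Set.Iio s)) :=
        tendsto_nhdsWithin_of_tendsto_nhds_of_eventually_within _
          (hconv.comp hψ.tendsto_atTop) (Eventually.of_forall hψP)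
      obtain ⟨L, hL⟩ := hlimL s hs
      have hL0 : L = 0 := tendsto_nhds_unique (hL.comp hv) (hbound ψ hψ)
      exact hA.2 s (hL0 ▸ hL)
  · -- essInf > 0 ⇒ (A)
    intro hm
    rw [essInf_eq_sSup] at hm
    have hSne : {a : ℝ | μr {x | f x < a} = 0}.Nonempty := by
      by_contra h
      rw [Set.not_nonempty_iff_eq_empty] at h
      rw [h, Real.sSup_empty] at hm
      exact lt_irrefl _ hm
    obtain ⟨c, hcS, hc0⟩ := exists_lt_of_lt_csSup hSne hm
    -- a helper to derive a contradiction from an interval inside [0,1] where f < c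
    have key : ∀ a b : ℝ, a < b → Set.Ioo a b ⊆ Set.Icc (0 : ℝ) 1 →
        (∀ t ∈ Set.Ioo a b, f t < c) → False := by
      intro a b hab hsub hlt
      have hJ : Set.Ioo a b ⊆ {x | f x < c} := fun t ht => hlt t ht
      have h0 : μr (Set.Ioo a b) = 0 := measure_mono_null hJ hcS
      rw [hμr, Measure.restrict_apply' measurableSet_Icc,
        Set.inter_eq_self_of_subset_left hsub, Real.volume_Ioo] at h0
      rw [ENNReal.ofReal_eq_zero] at h0
      linarith
    constructor
    · intro s hT
      have hpre : f ⁻¹' Set.Iio c ∈ nhdsWithin s (Set.Ioi s) := hT (Iio_mem_nhds hc0)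
      obtain ⟨b, hb, hsub⟩ := mem_nhdsGT_iff_exists_Ioo_subset.1 hpre
      have hsb : s < b := hb
      set s' : ℝ := s - (⌊s⌋ : ℝ) with hs'
      have hfl : (⌊s⌋ : ℝ) ≤ s := Int.floor_le s
      have hfl2 : s < (⌊s⌋ : ℝ) + 1 := Int.lt_floor_add_one s
      have hs'0 : 0 ≤ s' := by rw [hs']; linarith
      have hs'1 : s' < 1 := by rw [hs']; linarith
      set b' : ℝ := min (s' + (b - s)) 1 with hb'
      refine key s' b' ?_ ?_ ?_
      · exact lt_min (by linarith) (by linarith)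
      · intro t ht
        exact ⟨le_of_lt (lt_of_le_of_lt hs'0 ht.1), le_of_lt (lt_of_lt_of_le ht.2 (min_le_right _ _))⟩
      · intro t ht
        have h1 : t + (⌊s⌋ : ℝ) ∈ Set.Ioo s b := by
          have ht1 : s' < t := ht.1
          have ht2 : t < s' + (b - s) := lt_of_lt_of_le ht.2 (min_le_left _ _)
          rw [hs'] at ht1 ht2
          constructor
          · linarith
          · linarith
        have h3 : f t = f (t + (⌊s⌋ : ℝ)) := by
          have := fshift (t + (⌊s⌋ : ℝ)) ⌊s⌋
          simp only [mul_one] at this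
          rw [← this]; ring_nf
        rw [h3]
        exact hsub h1
    · intro s hT
      have hpre : f ⁻¹' Set.Iio c ∈ nhdsWithin s (Set.Iio s) := hT (Iio_mem_nhds hc0)
      obtain ⟨l, hl, hsub⟩ := mem_nhdsLT_iff_exists_Ioo_subset.1 hpre
      have hls : l < s := hl
      set k : ℤ := ⌈s⌉ - 1 with hk
      have hkr : (k : ℝ) = (⌈s⌉ : ℝ) - 1 := by rw [hk]; push_cast; ring
      have hc1 : (⌈s⌉ : ℝ) < s + 1 := Int.ceil_lt_add_one s
      have hc2 : s ≤ (⌈s⌉ : ℝ) := Int.le_ceil s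
      set s' : ℝ := s - (k : ℝ) with hs'
      have hs'0 : 0 < s' := by rw [hs', hkr]; linarith
      have hs'1 : s' ≤ 1 := by rw [hs', hkr]; linarith
      set a' : ℝ := max (s' - (s - l)) 0 with ha'
      refine key a' s' ?_ ?_ ?_
      · exact max_lt (by linarith) hs'0
      · intro t ht
        exact ⟨le_of_lt (lt_of_le_of_lt (le_max_right _ _) ht.1), le_of_lt (lt_of_lt_of_le ht.2 hs'1)⟩
      · intro t ht
        have h1 : t + (k : ℝ) ∈ Set.Ioo l s := by
          have ht1 : s' - (s - l) < t := lt_of_le_of_lt (le_max_left _ _) ht.1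
          have ht2 : t < s' := ht.2
          rw [hs'] at ht1 ht2
          constructor
          · linarith
          · linarith
        have h3 : f t = f (t + (k : ℝ)) := by
          have := fshift (t + (k : ℝ)) k
          simp only [mul_one] at this
          rw [← this]; ring_nf
        rw [h3]
        exact hsub h1
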